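/- Let (C, ◇, †) be a guarded Conway category such that ◇ preserves finite products and is well-pointed, i.e. ◇p_X = p_{◇X} for all X. Then † satisfies dinaturality: for all f : ◇X × A → Y and g : ◇Y × A → X, (g ∘ ⟨p_Y ∘ f, π_r⟩)† = g ∘ ⟨p_Y ∘ h†, id_A⟩, where h = f ∘ ⟨p_X ∘ g, π_r⟩ : ◇Y × A → Y. -/

import Mathlib

open CategoryTheory CategoryTheory.Limits

universe v u

attribute [local simp] prod.lift_fst prod.lift_snd prod.lift_fst_assoc prod.lift_snd_assoc

/-- A guarded Conway category structure: a guarded fixpoint operator `dag` satisfying the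
fixpoint, parameter, (simplified) composition and double dagger identities. -/
structure IsGuardedConway {C : Type u} [Category.{v} C] [HasFiniteProducts C]
    (D : C ⥤ C) (p : 𝟭 C ⟶ D)
    (dag : ∀ {X Y : C}, (D.obj X ⨯ Y ⟶ X) → (Y ⟶ X)) : Prop where
  fix : ∀ {X Y : C} (f : D.obj X ⨯ Y ⟶ X),
      dag f = prod.lift (dag f) (𝟙 Y) ≫ prod.map (p.app X) (𝟙 Y) ≫ f
  param : ∀ {X Y Z : C} (f : D.obj X ⨯ Y ⟶ X) (h : Z ⟶ Y),
      dag (prod.map (𝟙 (D.obj X)) h ≫ f) = h ≫ dag f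
  comp : ∀ {X Y Z : C} (f : D.obj X ⨯ Y ⟶ Z) (g : Z ⟶ X),
      dag (f ≫ g) = dag (prod.map (D.map g) (𝟙 Y) ≫ f) ≫ g
  ddag : ∀ {X Y : C} (f : D.obj X ⨯ (D.obj X ⨯ Y) ⟶ X),
      dag (dag f) = dag (prod.lift prod.fst (𝟙 (D.obj X ⨯ Y)) ≫ f)

/-- If the composite `m ≫ k` factors through the parameter projection, then
`dag m ≫ k` is computable from the fixpoint identity alone. -/
lemma dag_comp_of_snd {C : Type u} [Category.{v} C] [HasFiniteProducts C]
    {D : C ⥤ C} {p : 𝟭 C ⟶ D} {dag : ∀ {X Y : C}, (D.obj X ⨯ Y ⟶ X) → (Y ⟶ X)}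
    (hC : IsGuardedConway D p @dag) {X P B : C} (m : D.obj X ⨯ P ⟶ X)
    (k : X ⟶ B) (r : P ⟶ B) (hm : m ≫ k = prod.snd ≫ r) :
    dag m ≫ k = r := by
  conv_lhs => rw [hC.fix m]
  rw [Category.assoc, Category.assoc, hm]
  simp

/-- **Dinaturality from the Conway axioms.**  If `(C, ◇, †)` is a guarded Conway category
such that `◇` preserves finite products (the canonical morphisms
`can = ⟨◇π_ℓ, ◇π_r⟩ : ◇(X × Y) ⟶ ◇X × ◇Y` and `◇1 ⟶ 1` are isomorphisms) and `◇` is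
well-pointed (`◇p_X = p_{◇X}`), then `†` satisfies dinaturality. -/
theorem guardedConway_dinaturality
    {C : Type u} [Category.{v} C] [HasFiniteProducts C]
    (D : C ⥤ C) (p : 𝟭 C ⟶ D)
    (dag : ∀ {X Y : C}, (D.obj X ⨯ Y ⟶ X) → (Y ⟶ X))
    (hC : IsGuardedConway D p @dag)
    -- ◇ preserves binary products
    (hcan : ∀ X Y : C,
      IsIso (prod.lift (D.map (prod.fst : X ⨯ Y ⟶ X)) (D.map (prod.snd : X ⨯ Y ⟶ Y))))
    -- ◇ preserves the terminal object
    (hterm : IsIso (terminal.from (D.obj (⊤_ C))))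
    -- ◇ is well-pointed
    (hwp : ∀ X : C, D.map (p.app X) = p.app (D.obj X)) :
    ∀ {X Y A : C} (f : D.obj X ⨯ A ⟶ Y) (g : D.obj Y ⨯ A ⟶ X),
      dag (prod.lift (f ≫ p.app Y) prod.snd ≫ g) =
        prod.lift (dag (prod.lift (g ≫ p.app X) prod.snd ≫ f) ≫ p.app Y) (𝟙 A) ≫ g := by
  intro X Y A f g
  have hnat : ∀ {P Q : C} (m : P ⟶ Q), p.app P ≫ D.map m = m ≫ p.app Q := by
    intro P Q m; simpa using (p.naturality m).symm
  -- the canonical isos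
  set c : D.obj (Y ⨯ A) ⟶ D.obj Y ⨯ D.obj A :=
    prod.lift (D.map prod.fst) (D.map prod.snd) with hcdef
  haveI : IsIso c := hcan Y A
  set c' : D.obj (D.obj Y ⨯ A) ⟶ D.obj (D.obj Y) ⨯ D.obj A :=
    prod.lift (D.map prod.fst) (D.map prod.snd) with hc'def
  haveI : IsIso c' := hcan (D.obj Y) A
  have hc1 : inv c ≫ D.map (prod.fst : Y ⨯ A ⟶ Y) = prod.fst := by
    rw [IsIso.inv_comp_eq]; simp [hcdef]
  have hc2 : inv c ≫ D.map (prod.snd : Y ⨯ A ⟶ A) = prod.snd := by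
    rw [IsIso.inv_comp_eq]; simp [hcdef]
  -- morphism zoo
  set g' : Y ⨯ A ⟶ X := prod.map (p.app Y) (𝟙 A) ≫ g with hg'def
  set w : D.obj (Y ⨯ A) ⨯ A ⟶ Y := prod.map (D.map g') (𝟙 A) ≫ f with hwdef
  set v : D.obj (Y ⨯ A) ⨯ A ⟶ Y ⨯ A := prod.lift w prod.snd with hvdef
  set τ : D.obj Y ⨯ (D.obj A ⨯ A) ⟶ Y :=
    prod.lift (prod.lift prod.fst (prod.snd ≫ prod.fst) ≫ inv c) (prod.snd ≫ prod.snd) ≫ w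
    with hτdef
  set σ : D.obj A ⨯ A ⟶ Y := dag τ with hσdef
  set hh : D.obj (Y ⨯ A) ⨯ A ⟶ D.obj A ⨯ A :=
    prod.map (D.map prod.snd) (𝟙 A) with hhhdef
  set V : D.obj (Y ⨯ A) ⨯ A ⟶ Y ⨯ A := prod.lift (hh ≫ σ) prod.snd with hVdef
  set Θ : D.obj Y ⨯ (D.obj (Y ⨯ A) ⨯ A) ⟶ Y ⨯ A :=
    prod.lift (prod.lift (prod.lift prod.fst (prod.snd ≫ prod.fst ≫ D.map prod.snd) ≫ inv c)
      (prod.snd ≫ prod.snd) ≫ w) (prod.snd ≫ prod.snd) with hΘdef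
  set Ψ : D.obj (Y ⨯ A) ⨯ (D.obj (Y ⨯ A) ⨯ A) ⟶ Y ⨯ A :=
    prod.map (D.map prod.fst) (𝟙 (D.obj (Y ⨯ A) ⨯ A)) ≫ Θ with hΨdef
  set t : D.obj Y ⨯ A ⟶ Y :=
    prod.lift (prod.map (𝟙 (D.obj Y)) (p.app A) ≫ inv c) prod.snd ≫ w with htdef
  -- Step A: the "trivial recursion" dagger
  have hβ : (dag (prod.map (D.map (prod.snd : D.obj A ⨯ A ⟶ A)) (𝟙 A)) : A ⟶ D.obj A ⨯ A)
      = prod.lift (p.app A) (𝟙 A) := by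
    set β : D.obj (D.obj A ⨯ A) ⨯ A ⟶ D.obj A ⨯ A :=
      prod.map (D.map (prod.snd : D.obj A ⨯ A ⟶ A)) (𝟙 A) with hβdef
    have hβsnd : (dag β : A ⟶ D.obj A ⨯ A) ≫ prod.snd = 𝟙 A :=
      dag_comp_of_snd hC β prod.snd (𝟙 A) (by simp [hβdef])
    have hβfst : (dag β : A ⟶ D.obj A ⨯ A) ≫ prod.fst = p.app A := by
      conv_lhs => rw [hC.fix β]
      rw [Category.assoc, Category.assoc,
        show β ≫ prod.fst = prod.fst ≫ D.map prod.snd from by simp [hβdef]]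
      simp only [prod.map_fst_assoc, prod.lift_fst_assoc]
      rw [hnat, ← Category.assoc, hβsnd, Category.id_comp]
    exact Limits.prod.hom_ext (by rw [hβfst]; simp) (by rw [hβsnd]; simp)
  -- Step B: dag V
  have hVval : (dag V : A ⟶ Y ⨯ A) = prod.lift (prod.lift (p.app A) (𝟙 A) ≫ σ) (𝟙 A) := by
    have e3 : hh ≫ prod.lift σ prod.snd = V := by
      rw [hVdef]
      apply Limits.prod.hom_ext <;> simp [hhhdef]
    have e4 : prod.map (D.map (prod.lift σ prod.snd)) (𝟙 A) ≫ hh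
        = prod.map (D.map (prod.snd : D.obj A ⨯ A ⟶ A)) (𝟙 A) := by
      rw [hhhdef]
      apply Limits.prod.hom_ext <;> simp [← D.map_comp]
    rw [← e3, hC.comp hh (prod.lift σ prod.snd), e4, hβ]
    apply Limits.prod.hom_ext <;> simp
  -- Step C: dag Ψ = V
  have hΘfst : Θ ≫ prod.fst = prod.map (𝟙 (D.obj Y)) hh ≫ τ := by
    rw [hΘdef, hτdef]
    simp [hhhdef, prod.comp_lift_assoc, prod.comp_lift]
  have hΨsnd : (dag Ψ : D.obj (Y ⨯ A) ⨯ A ⟶ Y ⨯ A) ≫ prod.snd = prod.snd :=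
    dag_comp_of_snd hC Ψ prod.snd prod.snd (by simp [hΨdef, hΘdef])
  have hΨval : (dag Ψ : D.obj (Y ⨯ A) ⨯ A ⟶ Y ⨯ A) = V := by
    apply Limits.prod.hom_ext
    · have := hC.comp Θ (prod.fst : Y ⨯ A ⟶ Y)
      rw [← hΨdef] at this
      rw [← this, hΘfst, hC.param τ hh, hVdef]
      simp [hσdef]
    · rw [hΨsnd, hVdef]; simp
  -- Step D: double dagger gives dag v = dag V
  have hkey : prod.lift (prod.fst ≫ D.map prod.fst) (prod.fst ≫ D.map (prod.snd : Y ⨯ A ⟶ A))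
      ≫ inv c = (prod.fst : D.obj (Y ⨯ A) ⨯ A ⟶ D.obj (Y ⨯ A)) := by
    rw [← prod.comp_lift, ← hcdef, Category.assoc, IsIso.hom_inv_id, Category.comp_id]
  have hdiag : prod.lift prod.fst (𝟙 (D.obj (Y ⨯ A) ⨯ A)) ≫ Ψ = v := by
    rw [hΨdef, hΘdef, hvdef]
    simp only [prod.comp_lift, prod.comp_lift_assoc, Category.assoc, prod.lift_fst,
      prod.lift_fst_assoc, prod.lift_snd, prod.lift_snd_assoc, prod.map_fst, prod.map_snd,
      prod.map_fst_assoc, prod.map_snd_assoc, Category.id_comp, Category.comp_id]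
    rw [hkey]
    simp
  have hvV : (dag v : A ⟶ Y ⨯ A) = dag V := by
    rw [← hdiag, ← hC.ddag Ψ, hΨval]
  -- Step E: identification of t with h (uses well-pointedness)
  have hI : prod.map (𝟙 (D.obj Y)) (p.app A) ≫ inv c ≫ D.map g' = g ≫ p.app X := by
    have key : prod.map (𝟙 (D.obj Y)) (p.app A) ≫ inv c ≫ D.map (prod.map (p.app Y) (𝟙 A))
        = p.app (D.obj Y ⨯ A) := by
      rw [← cancel_mono c']
      apply Limits.prod.hom_ext
      · simp only [hc'def, Category.assoc, prod.lift_fst, ← D.map_comp, prod.map_fst]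
        rw [D.map_comp, reassoc_of% hc1, hwp, hnat]
        simp
      · simp only [hc'def, Category.assoc, prod.lift_snd, ← D.map_comp, prod.map_snd,
          Category.comp_id]
        rw [hc2, hnat]
        simp
    rw [hg'def, D.map_comp, reassoc_of% key, hnat]
  have hth : t = prod.lift (g ≫ p.app X) prod.snd ≫ f := by
    rw [htdef, hwdef, prod.lift_map_assoc, Category.comp_id, Category.assoc, hI]
  have epre : prod.map (𝟙 (D.obj Y)) (p.app A)
      = prod.map (𝟙 (D.obj Y)) (prod.lift (p.app A) (𝟙 A))
        ≫ prod.lift prod.fst (prod.snd ≫ prod.fst) := by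
    apply Limits.prod.hom_ext <;> simp
  have hteq : t = prod.map (𝟙 (D.obj Y)) (prod.lift (p.app A) (𝟙 A)) ≫ τ := by
    rw [htdef, hτdef, epre]
    simp [prod.comp_lift_assoc, prod.comp_lift]
  have hhd : (dag (prod.lift (g ≫ p.app X) prod.snd ≫ f) : A ⟶ Y)
      = prod.lift (p.app A) (𝟙 A) ≫ σ := by
    rw [← hth, hteq, hC.param τ (prod.lift (p.app A) (𝟙 A)), hσdef]
  -- Step F: assemble
  have e1 : prod.lift f prod.snd ≫ g' = prod.lift (f ≫ p.app Y) prod.snd ≫ g := by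
    rw [hg'def, prod.lift_map_assoc, Category.comp_id]
  have e2 : prod.map (D.map g') (𝟙 A) ≫ prod.lift f prod.snd = v := by
    rw [hvdef, hwdef, prod.comp_lift]
    simp
  rw [← e1, hC.comp (prod.lift f prod.snd) g', e2, hvV, hVval, hhd, hg'def,
    prod.lift_map_assoc, Category.comp_id, Category.assoc]
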